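/- arXiv:2402.06779 — 2 statements merged into one kernel-verified Lean document; each statement's English description precedes it below -/
import Mathlib

section
/- The 4×4 Jacobian determinant of the first patch at the disease-free equilibrium factors as the product of a quadratic and two linear factors: det(J₁ − λI) = [(prA/k + α + μ_S + λ)(μ_S + λ) − 2αprA/k]·(μ_I + λ)·(λ − (β₁ − μ_I)) up to sign, where N₁ = J_S + A, where the matrix has rows: (−prA/k − (α+μ_S) − λ, −prA/k − β₁J_S/N₁, −2prA/k, −prA/k − β₁J_S/N₁), (0, β₁J_S/N₁ − μ_I − λ, 0, β₁J_S/N₁), (α, −β₁A/N₁, −μ_S − λ, −β₁A/N₁), (0, β₁A/N₁, 0, β₁A/N₁ − μ_I − λ). -/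
set_option maxHeartbeats 2000000 in
lemma my_det_fin_four (M : Matrix (Fin 4) (Fin 4) ℝ) :
    M.det =
      M 0 0*(M 1 1*(M 2 2*M 3 3 - M 2 3*M 3 2) - M 1 2*(M 2 1*M 3 3 - M 2 3*M 3 1) + M 1 3*(M 2 1*M 3 2 - M 2 2*M 3 1))
    - M 0 1*(M 1 0*(M 2 2*M 3 3 - M 2 3*M 3 2) - M 1 2*(M 2 0*M 3 3 - M 2 3*M 3 0) + M 1 3*(M 2 0*M 3 2 - M 2 2*M 3 0))
    + M 0 2*(M 1 0*(M 2 1*M 3 3 - M 2 3*M 3 1) - M 1 1*(M 2 0*M 3 3 - M 2 3*M 3 0) + M 1 3*(M 2 0*M 3 1 - M 2 1*M 3 0))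
    - M 0 3*(M 1 0*(M 2 1*M 3 2 - M 2 2*M 3 1) - M 1 1*(M 2 0*M 3 2 - M 2 2*M 3 0) + M 1 2*(M 2 0*M 3 1 - M 2 1*M 3 0)) := by
  rw [Matrix.det_succ_row_zero]
  simp [Fin.sum_univ_succ, Matrix.det_fin_three, Matrix.submatrix_apply, Fin.succAbove]
  norm_num [show (Fin.succ 2 : Fin 4) = 3 from rfl, show (Fin.castSucc 2 : Fin 4) = 2 from rfl,
    show ((1:Fin 4) < Fin.succ 2) from by decide, show ((1:Fin 4) < 3) from by decide]
  ring

set_option maxHeartbeats 2000000 in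
theorem first_patch_dfe_jacobian_det_factors
    (p r k α μS μI β₁ JS A lam : ℝ)
    (hp : 0 < p) (hr : 0 < r) (hk : 0 < k) (hα : 0 < α) (hμS : 0 < μS)
    (hμI : 0 < μI) (hβ : 0 < β₁) (hJS : 0 ≤ JS) (hA : 0 ≤ A)
    (N₁ : ℝ) (hN : N₁ = JS + A) (hNpos : 0 < N₁) :
    (Matrix.of
      ![![-(p*r*A/k) - (α + μS) - lam, -(p*r*A/k) - β₁*JS/N₁, -(2*p*r*A/k), -(p*r*A/k) - β₁*JS/N₁],
        ![0, β₁*JS/N₁ - μI - lam, 0, β₁*JS/N₁],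
        ![α, -(β₁*A/N₁), -μS - lam, -(β₁*A/N₁)],
        ![0, β₁*A/N₁, 0, β₁*A/N₁ - μI - lam]] : Matrix (Fin 4) (Fin 4) ℝ).det
    = (-((-(p*r*A/k) - (α + μS) - lam) * (μS + lam)) + α * (2*p*r*A/k))
      * (-(β₁ * (μI + lam)) + (μI + lam) ^ 2) := by
  have hk' : k ≠ 0 := ne_of_gt hk
  have hN' : N₁ ≠ 0 := ne_of_gt hNpos
  rw [my_det_fin_four]
  simp only [Matrix.of_apply, Matrix.cons_val]
  norm_num [Matrix.of_apply]
  subst hN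
  field_simp
  ring
end

section
/- The endemic equilibrium infected level of the first patch equals I₁* = (k(R₀,₁ − 1)/(r R_p R_α R₀,₁))·(r R_p R_α − (R₀,₁ + R_s + R_α − 1)(R₀,₁ + R_s − 1)), derived from the relation 0 = prλ₁(1 − R₀,₁ I₁/(k(R₀,₁−1)))·R₀,₁/(R₀,₁−1) − μ_I R₀,₁ − R₀,₁(α+μ_S)/(R₀,₁−1) with λ₁ = R_α/(R₀,₁ + R_s − 1). -/
theorem endemic_I1_star_formula (r k p α μS μI R₀ Rp Rα Rs lam1 : ℝ)
    (hr : 0 < r) (hk : 0 < k) (hp : 0 < p) (hα : 0 < α) (hμS : 0 < μS) (hμI : 0 < μI)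
    (hR₀ : 1 < R₀) (hRp : Rp = p / μI) (hRα : Rα = α / μI) (hRs : Rs = μS / μI)
    (hden : 0 < R₀ + Rs - 1) (hlam : lam1 = Rα / (R₀ + Rs - 1)) :
    ∀ I₁ : ℝ,
      (0 = p * r * lam1 * (1 - (R₀ / (k * (R₀ - 1))) * I₁) * (R₀ / (R₀ - 1))
            - μI * R₀ - R₀ * (α + μS) / (R₀ - 1))
      ↔ I₁ = (k * (R₀ - 1) / (r * Rp * Rα * R₀))
              * (r * Rp * Rα - (R₀ + Rs + Rα - 1) * (R₀ + Rs - 1)) := by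
  intro I₁
  subst hRp hRα hRs hlam
  have h1 : R₀ - 1 ≠ 0 := by linarith
  have h3 : μI ≠ 0 := ne_of_gt hμI
  have hA : R₀ * μI + μS - μI ≠ 0 := by
    have e : R₀ * μI + μS - μI = μI * (R₀ + μS / μI - 1) := by field_simp
    rw [e]; positivity
  have h4 : k ≠ 0 := ne_of_gt hk
  have h5 : r ≠ 0 := ne_of_gt hr
  have h6 : p ≠ 0 := ne_of_gt hp
  have h7 : α ≠ 0 := ne_of_gt hα
  have h8 : R₀ ≠ 0 := by positivity
  have hA' : μI * R₀ + μS - μI ≠ 0 := by convert hA using 2; ring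
  field_simp
  have hRR : R₀ * (R₀ - 1) ≠ 0 := mul_ne_zero h8 h1
  have hμ2 : μI * μI ≠ 0 := mul_ne_zero h3 h3
  constructor
  · intro h
    refine mul_right_cancel₀ hRR ?_
    linear_combination (R₀-1) * h
  · intro h
    refine mul_right_cancel₀ hμ2 ?_
    linear_combination (R₀*μI*μI) * h
end
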